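/- For every integer d ≥ 4 and every p ∈ (0,1), the series ∑_{n=0}^∞ ∑_{k=0}^n [C(n,k)·p^k·(1-p)^{n-k}]^d converges. -/

import Mathlib

open Real intervalIntegral in
lemma orth (m : ℤ) (hm : m ≠ 0) :
    ∫ t in (-π)..π, Complex.exp (m * t * Complex.I) = 0 := by
  have hc : (m : ℂ) * Complex.I ≠ 0 := by
    simp [Complex.I_ne_zero, hm]
  have key : ∀ t : ℝ, (m : ℂ) * t * Complex.I = (m * Complex.I) * t := by
    intro t; ring
  simp only [key]
  rw [integral_exp_mul_complex hc]
  have : Complex.exp ((m:ℂ) * Complex.I * π) = Complex.exp ((m:ℂ) * Complex.I * (-π:ℝ)) := by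
    rw [Complex.exp_eq_exp_iff_exists_int]
    exact ⟨m, by push_cast; ring⟩
  rw [this, sub_self, zero_div]

open Real intervalIntegral Finset in
lemma coeff (p : ℝ) (n k : ℕ) (hk : k ≤ n) :
    ∫ t in (-π)..π, ((1-p : ℂ) + p * Complex.exp (t * Complex.I))^n
        * Complex.exp ((-(k:ℤ)) * t * Complex.I)
      = 2 * π * ((n.choose k : ℝ) * p^k * (1-p)^(n-k)) := by
  have expand : ∀ t : ℝ, ((1-p : ℂ) + p * Complex.exp (t * Complex.I))^n
        * Complex.exp ((-(k:ℤ)) * t * Complex.I)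
      = ∑ j ∈ range (n+1),
          ((n.choose j : ℝ) * p^j * (1-p)^(n-j) : ℂ)
            * Complex.exp (((j:ℤ) - (k:ℤ)) * t * Complex.I) := by
    intro t
    rw [add_comm ((1-p:ℂ)) _, add_pow, Finset.sum_mul]
    refine Finset.sum_congr rfl fun j hj => ?_
    rw [mul_pow, ← Complex.exp_nat_mul]
    push_cast
    rw [show ((j:ℂ) - (k:ℂ)) * (t:ℂ) * Complex.I
        = (j:ℂ) * ((t:ℂ) * Complex.I) + -(k:ℂ) * (t:ℂ) * Complex.I from by ring,
      Complex.exp_add]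
    ring
  simp only [expand]
  rw [integral_finset_sum]
  · rw [Finset.sum_eq_single k]
    · rw [integral_const_mul]
      push_cast
      simp only [sub_self, zero_mul, Complex.exp_zero]
      rw [integral_const]
      push_cast
      rw [Complex.real_smul]
      push_cast
      ring
    · intro j hj hjk
      rw [integral_const_mul]
      have hne : ((j:ℤ) - (k:ℤ)) ≠ 0 := by
        simp only [sub_ne_zero]; exact_mod_cast hjk
      have ho := orth ((j:ℤ) - (k:ℤ)) hne
      push_cast at ho ⊢
      rw [ho, mul_zero]
    · intro h
      exact absurd (Finset.mem_range.2 (Nat.lt_succ_of_le hk)) h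
  · intro j hj
    apply Continuous.intervalIntegrable
    fun_prop

open Real in
lemma normb (p t : ℝ) (hp : 0 < p) (hp1 : p < 1) (ht : |t| ≤ π) :
    ‖(1-p : ℂ) + p * Complex.exp (t*Complex.I)‖ ≤ Real.exp (-(2*p*(1-p)/π^2) * t^2) := by
  have hq : 0 < 1 - p := by linarith
  have hsq : ‖(1-p : ℂ) + p * Complex.exp (t*Complex.I)‖^2
      = 1 - 2*p*(1-p)*(1 - Real.cos t) := by
    rw [Complex.sq_norm]
    rw [Complex.exp_mul_I]
    have : (1-p : ℂ) + p * (Complex.cos t + Complex.sin t * Complex.I)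
        = Complex.mk (1 - p + p * Real.cos t) (p * Real.sin t) := by
      apply Complex.ext <;> simp [Complex.cos_ofReal_re, Complex.sin_ofReal_re] <;> ring
    rw [this, Complex.normSq_mk]
    linear_combination (p^2) * Real.sin_sq_add_cos_sq t
  have hcos : Real.cos t ≤ 1 - 2 / π^2 * t^2 := Real.cos_le_one_sub_mul_cos_sq ht
  have hpq : (0:ℝ) ≤ 2*p*(1-p) := by positivity
  have h1 : ‖(1-p : ℂ) + p * Complex.exp (t*Complex.I)‖^2
      ≤ Real.exp (-(2*p*(1-p)/π^2) * t^2)^2 := by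
    rw [hsq]
    have h2 : Real.exp (-(2*p*(1-p)/π^2) * t^2)^2 = Real.exp (-(4*p*(1-p)/π^2) * t^2) := by
      rw [← Real.exp_nat_mul]; ring_nf
    rw [h2]
    have h3 := Real.add_one_le_exp (-(4*p*(1-p)/π^2) * t^2)
    have h5 := mul_le_mul_of_nonneg_left (by linarith : 2/π^2*t^2 ≤ 1 - Real.cos t) hpq
    have h4 : 2*p*(1-p) * (2/π^2*t^2) = 4*p*(1-p)/π^2 * t^2 := by ring
    linarith
  calc ‖(1-p : ℂ) + p * Complex.exp (t*Complex.I)‖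
      = Real.sqrt (‖(1-p : ℂ) + p * Complex.exp (t*Complex.I)‖^2) :=
        (Real.sqrt_sq (norm_nonneg _)).symm
    _ ≤ Real.sqrt (Real.exp (-(2*p*(1-p)/π^2) * t^2)^2) := Real.sqrt_le_sqrt h1
    _ = _ := Real.sqrt_sq (Real.exp_nonneg _)

open Real MeasureTheory in
lemma gaussb (b : ℝ) (hb : 0 < b) :
    ∫ t in (-π)..π, Real.exp (-b * t^2) ≤ Real.sqrt (π / b) := by
  rw [intervalIntegral.integral_of_le (by linarith [Real.pi_pos])]
  have h1 : ∫ t in Set.Ioc (-π) π, Real.exp (-b * t^2)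
      ≤ ∫ t : ℝ, Real.exp (-b * t^2) := by
    apply setIntegral_le_integral (integrable_exp_neg_mul_sq hb)
    filter_upwards with x using by positivity
  rw [integral_gaussian] at h1
  exact h1

open Real intervalIntegral in
lemma pmf_le (p : ℝ) (hp : 0 < p) (hp1 : p < 1) (n k : ℕ) (hn : 1 ≤ n) (hk : k ≤ n) :
    (n.choose k : ℝ) * p^k * (1-p)^(n-k)
      ≤ (Real.sqrt (π/(2*p*(1-p))) / 2) / Real.sqrt n := by
  have hq : 0 < 1 - p := by linarith
  have hpi := Real.pi_pos
  have hn' : (0:ℝ) < n := by exact_mod_cast hn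
  set a : ℝ := (n.choose k : ℝ) * p^k * (1-p)^(n-k) with ha
  have ha0 : 0 ≤ a := by positivity
  -- step 1 : 2π a ≤ ∫ ‖φ‖^n
  have h1 : 2 * π * a ≤ ∫ t in (-π)..π,
      ‖(1-p : ℂ) + p * Complex.exp (t*Complex.I)‖^n := by
    have hb : 2 * π * a = ‖∫ t in (-π)..π, ((1-p : ℂ) + p * Complex.exp (t*Complex.I))^n
        * Complex.exp ((-(k:ℤ)) * t * Complex.I)‖ := by
      rw [coeff p n k hk,
        show (2 * (π:ℂ) * ((n.choose k : ℝ) * p^k * (1-p)^(n-k)) : ℂ) = ((2 * π * a : ℝ) : ℂ) from by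
          push_cast [ha]; ring,
        Complex.norm_real, Real.norm_eq_abs, abs_of_nonneg (by positivity)]
    rw [hb]
    refine le_trans (norm_integral_le_integral_norm (by linarith)) ?_
    refine le_of_eq (intervalIntegral.integral_congr fun t ht => ?_)
    rw [norm_mul, norm_pow]
    have : ‖Complex.exp ((-(k:ℤ)) * t * Complex.I)‖ = 1 := by
      rw [Complex.norm_exp]
      simp
    rw [this, mul_one]
  -- step 2 : ∫ ‖φ‖^n ≤ ∫ exp (-(2npq/π²) t²)
  have h2 : (∫ t in (-π)..π, ‖(1-p : ℂ) + p * Complex.exp (t*Complex.I)‖^n)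
      ≤ ∫ t in (-π)..π, Real.exp (-(2*n*p*(1-p)/π^2) * t^2) := by
    apply intervalIntegral.integral_mono_on (by linarith)
    · apply Continuous.intervalIntegrable; fun_prop
    · apply Continuous.intervalIntegrable; fun_prop
    · intro t ht
      have habs : |t| ≤ π := abs_le.2 ⟨ht.1, ht.2⟩
      calc ‖(1-p : ℂ) + p * Complex.exp (t*Complex.I)‖^n
          ≤ Real.exp (-(2*p*(1-p)/π^2) * t^2)^n :=
            pow_le_pow_left₀ (norm_nonneg _) (normb p t hp hp1 habs) n
        _ = Real.exp (-(2*n*p*(1-p)/π^2) * t^2) := by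
            rw [← Real.exp_nat_mul]; ring_nf
  -- step 3 : gaussian bound
  have hbpos : 0 < 2*n*p*(1-p)/π^2 := by positivity
  have h3 := gaussb _ hbpos
  have h4 : Real.sqrt (π / (2*n*p*(1-p)/π^2)) = π * (Real.sqrt (π/(2*p*(1-p))) / Real.sqrt n) := by
    rw [show π / (2*(n:ℝ)*p*(1-p)/π^2) = π^2 * ((π/(2*p*(1-p))) / n) from by
      field_simp]
    rw [Real.sqrt_mul (by positivity), Real.sqrt_sq hpi.le,
      Real.sqrt_div (by positivity) _]
  have := le_trans h1 (le_trans h2 h3)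
  rw [h4] at this
  have h6 : π * (2 * a) ≤ π * (Real.sqrt (π/(2*p*(1-p))) / Real.sqrt n) := by linarith
  have h7 := (mul_le_mul_iff_right₀ hpi).1 h6
  have h8 : Real.sqrt (π/(2*p*(1-p))) / 2 / Real.sqrt n
      = (Real.sqrt (π/(2*p*(1-p))) / Real.sqrt n) / 2 := by ring
  linarith

open Real in
lemma sum_pmf (p : ℝ) (n : ℕ) :
    ∑ k ∈ Finset.range (n+1), (n.choose k : ℝ) * p^k * (1-p)^(n-k) = 1 := by
  have := add_pow p (1-p) n
  rw [show p + (1-p) = 1 from by ring, one_pow] at this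
  calc ∑ k ∈ Finset.range (n+1), (n.choose k : ℝ) * p^k * (1-p)^(n-k)
      = ∑ k ∈ Finset.range (n+1), p^k * (1-p)^(n-k) * (n.choose k : ℝ) :=
        Finset.sum_congr rfl fun k hk => by ring
    _ = 1 := this.symm

open Real in
lemma sum_summable_aux : Summable (fun n : ℕ => 1 / Real.sqrt ((n:ℝ)+1)^3) := by
  have h := (Real.summable_one_div_nat_rpow (p := 3/2)).2 (by norm_num)
  rw [← summable_nat_add_iff 1] at h
  refine h.congr fun n => ?_
  congr 1
  push_cast
  rw [Real.sqrt_eq_rpow, ← Real.rpow_natCast (((n:ℝ)+1) ^ ((1:ℝ)/2)) 3,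
    ← Real.rpow_mul (by positivity)]
  norm_num

open Finset
set_option maxHeartbeats 1000000

theorem stmt_6 (d : ℕ) (hd : 4 ≤ d) (p : ℝ) (hp : 0 < p) (hp1 : p < 1) :
    Summable (fun n : ℕ => ∑ k ∈ Finset.range (n + 1),
      ((n.choose k : ℝ) * p ^ k * (1 - p) ^ (n - k)) ^ d) := by
  have hq : 0 < 1 - p := by linarith
  set K : ℝ := Real.sqrt (Real.pi/(2*p*(1-p))) / 2 with hK
  have hK0 : 0 ≤ K := by positivity
  refine (summable_nat_add_iff 1).1 ?_
  apply Summable.of_nonneg_of_le (f := fun n : ℕ => K^3 * (1 / Real.sqrt ((n:ℝ)+1)^3))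
  · intro n
    apply Finset.sum_nonneg
    intro k hk
    positivity
  · intro n
    set m := n + 1 with hm
    have hm1 : 1 ≤ m := Nat.le_add_left 1 n
    have hms : (0:ℝ) < Real.sqrt m := Real.sqrt_pos.2 (by exact_mod_cast Nat.lt_of_lt_of_le Nat.zero_lt_one hm1)
    calc ∑ k ∈ Finset.range (m+1), ((m.choose k : ℝ) * p^k * (1-p)^(m-k)) ^ d
        ≤ ∑ k ∈ Finset.range (m+1), (K / Real.sqrt m)^3 *
            ((m.choose k : ℝ) * p^k * (1-p)^(m-k)) := by
          apply Finset.sum_le_sum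
          intro k hk
          set a : ℝ := (m.choose k : ℝ) * p^k * (1-p)^(m-k) with hadef
          have ha0 : 0 ≤ a := by positivity
          have ha1 : a ≤ 1 := by
            rw [← sum_pmf p m]
            exact Finset.single_le_sum (f := fun j => (m.choose j : ℝ) * p^j * (1-p)^(m-j)) (fun j hj => by positivity) hk
          have hak : a ≤ K / Real.sqrt m :=
            pmf_le p hp hp1 m k hm1 (Nat.lt_succ_iff.1 (Finset.mem_range.1 hk))
          calc a ^ d ≤ a ^ 4 := pow_le_pow_of_le_one ha0 ha1 hd
            _ = a^3 * a := by ring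
            _ ≤ (K / Real.sqrt m)^3 * a := by
                apply mul_le_mul_of_nonneg_right _ ha0
                exact pow_le_pow_left₀ ha0 hak 3
      _ = (K / Real.sqrt m)^3 := by
          rw [← Finset.mul_sum, sum_pmf p m, mul_one]
      _ = K^3 * (1 / Real.sqrt ((n:ℝ)+1)^3) := by
          rw [div_pow]
          rw [show ((m:ℝ)) = (n:ℝ)+1 from by push_cast [hm]; ring]
          ring
  · exact (sum_summable_aux).mul_left _
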